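/- Let p be a prime, a ≥ 1, and suppose m is the least positive integer x with τ_{p^a,x} = 2p^a. Then m is a power of p, say m = p^b with b ≥ a, and the sequence n ↦ τ_{p^a,n} is periodic with period m. -/

import Mathlib

/-- A line on the discrete torus `ZMod m × ZMod n`: the image of an integer line
`{A + k•(u,v) : k ∈ ℤ}` with `gcd(u,v) = 1`. -/
def torusLine (m n : ℕ) (L : Set (ZMod m × ZMod n)) : Prop :=
  ∃ (A : ZMod m × ZMod n) (u v : ℤ), Int.gcd u v = 1 ∧
    L = {P | ∃ k : ℤ, P = (A.1 + ((k * u : ℤ) : ZMod m), A.2 + ((k * v : ℤ) : ZMod n))}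

/-- Three points of the torus are collinear if some line contains all three. -/
def torusCollinear (m n : ℕ) (P Q R : ZMod m × ZMod n) : Prop :=
  ∃ L, torusLine m n L ∧ P ∈ L ∧ Q ∈ L ∧ R ∈ L

/-- No three (distinct) points of `S` lie on a common line. -/
def noThreeInLine (m n : ℕ) (S : Set (ZMod m × ZMod n)) : Prop :=
  ∀ P ∈ S, ∀ Q ∈ S, ∀ R ∈ S, P ≠ Q → P ≠ R → Q ≠ R → ¬ torusCollinear m n P Q R

/-- `tau m n`: maximal number of points on the torus with no three collinear. -/
noncomputable def tau (m n : ℕ) : ℕ :=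
  sSup {k | ∃ S : Finset (ZMod m × ZMod n), noThreeInLine m n ↑S ∧ S.card = k}


/-- Integer CRT for coprime moduli. -/
lemma myIntCRT (M N x y : ℤ) (h : IsCoprime M N) :
    ∃ z : ℤ, z ≡ x [ZMOD M] ∧ z ≡ y [ZMOD N] := by
  obtain ⟨u, v, huv⟩ := h
  refine ⟨y * u * M + x * v * N, ?_, ?_⟩
  · have h1 : y * u * M + x * v * N - x = M * (u * (y - x)) + x * (u*M + v*N - 1) := by ring
    rw [huv] at h1; simp at h1
    have : (M : ℤ) ∣ y * u * M + x * v * N - x := ⟨u * (y-x), h1⟩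
    exact (Int.modEq_iff_dvd.2 (by simpa [Int.dvd_neg] using this.neg_right)).symm.symm
  · have h1 : y * u * M + x * v * N - y = N * (v * (x - y)) + y * (u*M + v*N - 1) := by ring
    rw [huv] at h1; simp at h1
    have : (N : ℤ) ∣ y * u * M + x * v * N - y := ⟨v * (x-y), h1⟩
    exact (Int.modEq_iff_dvd.2 (by simpa [Int.dvd_neg] using this.neg_right)).symm.symm


lemma myShift (u v M : ℤ) (hu : u ≠ 0)
    (h : ∀ r : ℕ, r.Prime → (r : ℤ) ∣ u → (r : ℤ) ∣ M → ¬ (r : ℤ) ∣ v) :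
    ∃ k : ℤ, Int.gcd u (v + k * M) = 1 := by
  classical
  set F : Finset ℕ := u.natAbs.primeFactors.filter (fun r : ℕ => ¬ (r : ℤ) ∣ v) with hF
  set k : ℕ := F.prod (fun x => x) with hk
  refine ⟨(k : ℤ), ?_⟩
  by_contra hg
  obtain ⟨r, hrp, hrdvd⟩ := Nat.exists_prime_and_dvd (hg : Int.gcd u (v + (k:ℤ) * M) ≠ 1)
  have hru : (r : ℤ) ∣ u := dvd_trans (Int.natCast_dvd_natCast.2 hrdvd) (Int.gcd_dvd_left _ _)
  have hrv : (r : ℤ) ∣ v + (k:ℤ) * M := dvd_trans (Int.natCast_dvd_natCast.2 hrdvd) (Int.gcd_dvd_right _ _)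
  by_cases hv : (r : ℤ) ∣ v
  · have hrM : ¬ (r:ℤ) ∣ M := fun hM => h r hrp hru hM hv
    have hrk : ¬ (r:ℕ) ∣ k := by
      intro hdk
      obtain ⟨s, hs, hrs⟩ := (Nat.Prime.prime hrp).exists_mem_finset_dvd (hk ▸ hdk)
      have h2 := (Finset.mem_filter.1 (hF ▸ hs)).2
      have hsr : r = s := ((Nat.prime_dvd_prime_iff_eq hrp
        (Nat.prime_of_mem_primeFactors (Finset.mem_filter.1 (hF ▸ hs)).1)).1 hrs)
      exact h2 (hsr ▸ hv)
    have : (r:ℤ) ∣ (k:ℤ) * M := (dvd_add_right hv).mp hrv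
    rcases (Int.Prime.dvd_mul' hrp this) with h1 | h2
    · exact hrk (Int.natCast_dvd_natCast.1 h1)
    · exact hrM h2
  · have hrmem : r ∈ F := by
      refine Finset.mem_filter.2 ⟨Nat.mem_primeFactors.2 ⟨hrp, ?_, by simpa using hu⟩, hv⟩
      exact Int.natAbs_dvd_natAbs.2 hru
    have hrk : (r:ℕ) ∣ k := Finset.dvd_prod_of_mem (fun x => x) hrmem
    have : (r:ℤ) ∣ v := (dvd_add_right (Dvd.dvd.mul_right (Int.natCast_dvd_natCast.2 hrk) M)).mp
      (by rwa [add_comm] at hrv)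
    exact hv this

lemma noThree_empty (m n : ℕ) : noThreeInLine m n (↑(∅ : Finset (ZMod m × ZMod n))) := by
  intro P hP; simp at hP

lemma noThree_of_card_le_two {m n : ℕ} (S : Finset (ZMod m × ZMod n)) (h : S.card ≤ 2) :
    noThreeInLine m n ↑S := by
  intro P hP Q hQ R hR hPQ hPR hQR _
  have : ({P, Q, R} : Finset (ZMod m × ZMod n)) ⊆ S := by
    intro x hx; simp at hx; rcases hx with h|h|h <;> simp [h] <;> assumption
  have h3 : ({P, Q, R} : Finset (ZMod m × ZMod n)).card = 3 := by
    rw [Finset.card_insert_of_notMem (by simp [hPQ, hPR]),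
      Finset.card_insert_of_notMem (by simp [hQR]), Finset.card_singleton]
  have := Finset.card_le_card this
  omega

lemma tau_le {m n B : ℕ}
    (h : ∀ S : Finset (ZMod m × ZMod n), noThreeInLine m n ↑S → S.card ≤ B) :
    tau m n ≤ B := by
  refine csSup_le ⟨0, ∅, noThree_empty m n, by simp⟩ ?_
  rintro x ⟨S, hS, rfl⟩
  exact h S hS

lemma le_tau {m n : ℕ} [NeZero m] [NeZero n] (S : Finset (ZMod m × ZMod n))
    (hS : noThreeInLine m n ↑S) : S.card ≤ tau m n := by
  refine le_csSup ⟨Fintype.card (ZMod m × ZMod n), ?_⟩ ⟨S, hS, rfl⟩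
  rintro x ⟨T, hT, rfl⟩
  exact Finset.card_le_univ T

lemma two_le_tau {m n : ℕ} (hm : 2 ≤ m) (hn : 0 < n) : 2 ≤ tau m n := by
  haveI : NeZero m := ⟨by omega⟩
  haveI : NeZero n := ⟨by omega⟩
  haveI : Fact (1 < m) := ⟨hm⟩
  have hne : ((0 : ZMod m), (0 : ZMod n)) ≠ ((1 : ZMod m), (0 : ZMod n)) := by
    intro h
    exact zero_ne_one (α := ZMod m) (congrArg Prod.fst h)
  have := le_tau ({((0 : ZMod m), (0 : ZMod n)), ((1 : ZMod m), (0 : ZMod n))} : Finset _)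
    (noThree_of_card_le_two _ (Finset.card_insert_le _ _ |>.trans (by simp)))
  rwa [Finset.card_insert_of_notMem (by simpa using hne), Finset.card_singleton] at this

section A
variable {m n : ℕ} [NeZero m] [NeZero n]

/-- the diagonal fiber map -/
noncomputable def chi (m n : ℕ) [NeZero m] [NeZero n] (x : ZMod m × ZMod n) : ZMod (Nat.gcd m n) :=
  (ZMod.castHom (Nat.gcd_dvd_left m n) (ZMod (Nat.gcd m n)) x.1)
    - (ZMod.castHom (Nat.gcd_dvd_right m n) (ZMod (Nat.gcd m n)) x.2)

lemma exists_k_of_chi_eq {P Q : ZMod m × ZMod n} (h : chi m n P = chi m n Q) :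
    ∃ k : ℤ, Q.1 = P.1 + ((k * 1 : ℤ) : ZMod m) ∧ Q.2 = P.2 + ((k * 1 : ℤ) : ZMod n) := by
  set D1 := Q.1 - P.1 with hD1
  set D2 := Q.2 - P.2 with hD2
  have hchi : (ZMod.castHom (Nat.gcd_dvd_left m n) (ZMod (Nat.gcd m n)) D1)
      = (ZMod.castHom (Nat.gcd_dvd_right m n) (ZMod (Nat.gcd m n)) D2) := by
    simp only [hD1, hD2, map_sub]
    unfold chi at h
    linear_combination -h
  have hcong : D1.val ≡ D2.val [MOD Nat.gcd m n] := by
    rw [← ZMod.natCast_eq_natCast_iff]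
    calc (D1.val : ZMod (Nat.gcd m n)) = ZMod.castHom (Nat.gcd_dvd_left m n) _ D1 := by
          rw [ZMod.castHom_apply, ZMod.natCast_val]
      _ = ZMod.castHom (Nat.gcd_dvd_right m n) _ D2 := hchi
      _ = (D2.val : ZMod (Nat.gcd m n)) := by rw [ZMod.castHom_apply, ZMod.natCast_val]
  obtain ⟨k, hk1, hk2⟩ := Nat.chineseRemainder' hcong
  refine ⟨(k : ℤ), ?_, ?_⟩
  · have : (k : ZMod m) = (D1.val : ZMod m) := (ZMod.natCast_eq_natCast_iff _ _ _).2 hk1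
    rw [ZMod.natCast_val, ZMod.cast_id] at this
    push_cast
    rw [this, hD1]; ring
  · have : (k : ZMod n) = (D2.val : ZMod n) := (ZMod.natCast_eq_natCast_iff _ _ _).2 hk2
    rw [ZMod.natCast_val, ZMod.cast_id] at this
    push_cast
    rw [this, hD2]; ring

lemma collinear_of_chi_eq {P Q R : ZMod m × ZMod n} (h1 : chi m n P = chi m n Q)
    (h2 : chi m n P = chi m n R) : torusCollinear m n P Q R := by
  refine ⟨_, ⟨P, 1, 1, by simp, rfl⟩, ⟨0, by simp⟩, ?_, ?_⟩
  · obtain ⟨k, hk1, hk2⟩ := exists_k_of_chi_eq h1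
    exact ⟨k, Prod.ext hk1 hk2⟩
  · obtain ⟨k, hk1, hk2⟩ := exists_k_of_chi_eq h2
    exact ⟨k, Prod.ext hk1 hk2⟩

lemma tau_le_two_gcd (m n : ℕ) [NeZero m] [NeZero n] : tau m n ≤ 2 * Nat.gcd m n := by
  refine tau_le (fun S hS => ?_)
  classical
  haveI : NeZero (Nat.gcd m n) := ⟨Nat.gcd_ne_zero_left (NeZero.ne m)⟩
  have hfib : ∀ a ∈ S.image (chi m n), (S.filter (fun x => chi m n x = a)).card ≤ 2 := by
    intro a _
    by_contra hlt
    obtain ⟨P, hP, Q, hQ, R, hR, hPQ, hPR, hQR⟩ := (Finset.two_lt_card (s := S.filter (fun x => chi m n x = a))).1 (by omega)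
    simp only [Finset.mem_filter] at hP hQ hR
    exact hS P (by exact_mod_cast hP.1) Q (by exact_mod_cast hQ.1) R (by exact_mod_cast hR.1)
      hPQ hPR hQR (collinear_of_chi_eq (hP.2.trans hQ.2.symm) (hP.2.trans hR.2.symm))
  calc S.card ≤ 2 * (S.image (chi m n)).card := Finset.card_le_mul_card_image _ 2 hfib
    _ ≤ 2 * Nat.gcd m n := by
        have : (S.image (chi m n)).card ≤ Fintype.card (ZMod (Nat.gcd m n)) :=
          Finset.card_le_univ _
        rw [ZMod.card] at this
        omega
end A

section B
variable {m n d : ℕ} (hdn : d ∣ n)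

/-- projection to the smaller torus -/
def proj (m : ℕ) (hdn : d ∣ n) (x : ZMod m × ZMod n) : ZMod m × ZMod d :=
  (x.1, ZMod.castHom hdn (ZMod d) x.2)

lemma collinear_proj {P Q R : ZMod m × ZMod n} (h : torusCollinear m n P Q R) :
    torusCollinear m d (proj m hdn P) (proj m hdn Q) (proj m hdn R) := by
  obtain ⟨L, ⟨A, u, v, huv, rfl⟩, hP, hQ, hR⟩ := h
  refine ⟨_, ⟨proj m hdn A, u, v, huv, rfl⟩, ?_, ?_, ?_⟩
  all_goals {
    first
    | (obtain ⟨k, hk⟩ := hP; refine ⟨k, ?_⟩; rw [hk])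
    | (obtain ⟨k, hk⟩ := hQ; refine ⟨k, ?_⟩; rw [hk])
    | (obtain ⟨k, hk⟩ := hR; refine ⟨k, ?_⟩; rw [hk])
    simp [proj, Prod.ext_iff, map_add, ZMod.castHom_apply, ← Int.cast_mul, ZMod.cast_intCast hdn]
  }

lemma tau_mono_dvd {m n d : ℕ} [NeZero m] [NeZero n] [NeZero d] (hdn : d ∣ n) :
    tau m d ≤ tau m n := by
  classical
  refine csSup_le ⟨0, ∅, by intro P hP; simp at hP, by simp⟩ ?_
  rintro x ⟨S, hS, rfl⟩
  set lift : ZMod m × ZMod d → ZMod m × ZMod n := fun y => (y.1, ((y.2.val : ℕ) : ZMod n)) with hlift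
  have hpl : ∀ y : ZMod m × ZMod d, proj m hdn (lift y) = y := by
    intro y
    simp only [hlift, proj, Prod.ext_iff, ZMod.castHom_apply]
    refine ⟨trivial, ?_⟩
    rw [ZMod.cast_natCast hdn, ZMod.natCast_val, ZMod.cast_id]
  have hinj : Function.Injective lift := fun y z hyz => by
    rw [← hpl y, hyz, hpl z]
  have hgood : noThreeInLine m n ↑(S.image lift) := by
    intro P hP Q hQ R hR hPQ hPR hQR hcol
    simp only [Finset.coe_image, Set.mem_image, Finset.mem_coe] at hP hQ hR
    obtain ⟨P0, hP0, rfl⟩ := hP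
    obtain ⟨Q0, hQ0, rfl⟩ := hQ
    obtain ⟨R0, hR0, rfl⟩ := hR
    have := collinear_proj hdn hcol
    rw [hpl, hpl, hpl] at this
    exact hS P0 hP0 Q0 hQ0 R0 hR0 (fun h => hPQ (h ▸ rfl)) (fun h => hPR (h ▸ rfl))
      (fun h => hQR (h ▸ rfl)) this
  have := le_tau (S.image lift) hgood
  rwa [Finset.card_image_of_injective _ hinj] at this
end B


/-- divide out powers of p from a vector in `ZMod p^a × ZMod p^c` -/
lemma subD {p : ℕ} (hp : p.Prime) (a c : ℕ) :
    ∀ (N : ℕ) (γ : ZMod (p^a)) (ρ : ZMod (p^c)), γ.val + ρ.val ≤ N →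
    ∃ t α β : ℤ, ¬((p:ℤ) ∣ α ∧ (p:ℤ) ∣ β) ∧ γ = ((t*α : ℤ) : ZMod (p^a)) ∧
      ρ = ((t*β : ℤ) : ZMod (p^c)) := by
  haveI : NeZero (p^a) := ⟨pow_ne_zero _ hp.ne_zero⟩
  haveI : NeZero (p^c) := ⟨pow_ne_zero _ hp.ne_zero⟩
  intro N
  induction N with
  | zero =>
    intro γ ρ h
    have hγ : γ = 0 := by
      have : γ.val = 0 := by omega
      rwa [ZMod.val_eq_zero] at this
    have hρ : ρ = 0 := by
      have : ρ.val = 0 := by omega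
      rwa [ZMod.val_eq_zero] at this
    refine ⟨0, 1, 0, ?_, by simp [hγ], by simp [hρ]⟩
    rintro ⟨h', -⟩
    have : p = 1 := by exact_mod_cast Int.eq_one_of_dvd_one (by norm_num) h'
    exact hp.one_lt.ne' this
  | succ N ih =>
    intro γ ρ h
    by_cases hdvd : (p ∣ γ.val) ∧ (p ∣ ρ.val)
    · by_cases h0 : γ.val + ρ.val = 0
      · exact ih γ ρ (by omega)
      · set γ' : ZMod (p^a) := ((γ.val / p : ℕ) : ZMod (p^a)) with hγ'
        set ρ' : ZMod (p^c) := ((ρ.val / p : ℕ) : ZMod (p^c)) with hρ'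
        have hγ'v : γ'.val = γ.val / p := by
          rw [hγ', ZMod.val_natCast_of_lt]
          exact lt_of_le_of_lt (Nat.div_le_self _ _) (ZMod.val_lt γ)
        have hρ'v : ρ'.val = ρ.val / p := by
          rw [hρ', ZMod.val_natCast_of_lt]
          exact lt_of_le_of_lt (Nat.div_le_self _ _) (ZMod.val_lt ρ)
        have hlt : γ'.val + ρ'.val ≤ N := by
          rw [hγ'v, hρ'v]
          have h2 := hp.two_le
          have d1 := Nat.div_le_self γ.val p
          have d2 := Nat.div_le_self ρ.val p
          rcases Nat.eq_zero_or_pos γ.val with hz | hpos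
          · have : ρ.val / p < ρ.val := Nat.div_lt_self (by omega) (by omega)
            omega
          · have : γ.val / p < γ.val := Nat.div_lt_self hpos (by omega)
            omega
        obtain ⟨t', α, β, hαβ, h1, h2⟩ := ih γ' ρ' hlt
        refine ⟨p * t', α, β, hαβ, ?_, ?_⟩
        · have : γ = ((p * (γ.val / p) : ℕ) : ZMod (p^a)) := by
            rw [Nat.mul_div_cancel' hdvd.1, ZMod.natCast_val, ZMod.cast_id]
          rw [this]
          push_cast
          rw [show ((γ.val / p : ℕ) : ZMod (p^a)) = γ' from rfl, h1]
          push_cast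
          ring
        · have : ρ = ((p * (ρ.val / p) : ℕ) : ZMod (p^c)) := by
            rw [Nat.mul_div_cancel' hdvd.2, ZMod.natCast_val, ZMod.cast_id]
          rw [this]
          push_cast
          rw [show ((ρ.val / p : ℕ) : ZMod (p^c)) = ρ' from rfl, h2]
          push_cast
          ring
    · refine ⟨1, (γ.val : ℤ), (ρ.val : ℤ), ?_, ?_, ?_⟩
      · intro ⟨hA, hB⟩
        exact hdvd ⟨Int.natCast_dvd_natCast.1 hA, Int.natCast_dvd_natCast.1 hB⟩
      · push_cast
        rw [one_mul, ZMod.natCast_val, ZMod.cast_id]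
      · push_cast
        rw [one_mul, ZMod.natCast_val, ZMod.cast_id]

section M
variable {p a c q : ℕ}

lemma masterM (hp : p.Prime) (ha : 1 ≤ a) (hc : 1 ≤ c) (hq : Nat.Coprime p q) (hq0 : q ≠ 0)
    (P Q R : ZMod (p^a) × ZMod (p^c*q)) (s t α β : ℤ)
    (hαβ : ¬((p:ℤ) ∣ α ∧ (p:ℤ) ∣ β))
    (h1 : Q.1 - P.1 = ((s*α : ℤ) : ZMod (p^a)))
    (h2 : R.1 - P.1 = ((t*α : ℤ) : ZMod (p^a)))
    (h3 : ZMod.castHom (dvd_mul_right (p^c) q) (ZMod (p^c)) (Q.2 - P.2)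
      = ((s*β : ℤ) : ZMod (p^c)))
    (h4 : ZMod.castHom (dvd_mul_right (p^c) q) (ZMod (p^c)) (R.2 - P.2)
      = ((t*β : ℤ) : ZMod (p^c))) :
    torusCollinear (p^a) (p^c*q) P Q R := by
  haveI : NeZero (p^a) := ⟨pow_ne_zero _ hp.ne_zero⟩
  haveI : NeZero (p^c) := ⟨pow_ne_zero _ hp.ne_zero⟩
  haveI : NeZero (p^c*q) := ⟨mul_ne_zero (pow_ne_zero _ hp.ne_zero) hq0⟩
  set e := a + c with he
  have hcop : IsCoprime ((p^e : ℕ) : ℤ) ((q : ℕ) : ℤ) :=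
    Nat.isCoprime_iff_coprime.2 (hq.pow_left e)
  have hpe0 : ((p^e : ℕ) : ℤ) ≠ 0 := by exact_mod_cast pow_ne_zero _ hp.ne_zero
  have hq0' : ((q:ℕ):ℤ) ≠ 0 := by exact_mod_cast hq0
  have hpdvd_pe : ((p:ℕ):ℤ) ∣ ((p^e:ℕ):ℤ) := by
    exact_mod_cast Int.natCast_dvd_natCast.2 (dvd_pow_self p (by omega : e ≠ 0))
  -- choose u
  obtain ⟨u, hu0, huA, huB⟩ : ∃ u : ℤ, u ≠ 0 ∧ u ≡ α [ZMOD ((p^e:ℕ):ℤ)] ∧ u ≡ 0 [ZMOD ((q:ℕ):ℤ)] := by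
    obtain ⟨u₀, hA, hB⟩ := myIntCRT _ _ α 0 hcop
    by_cases h0 : u₀ = 0
    · refine ⟨u₀ + (p^e:ℕ) * (q:ℕ), by rw [h0, zero_add]; exact mul_ne_zero hpe0 hq0', ?_, ?_⟩
      · have h' : ((p^e:ℕ):ℤ) * q ≡ 0 [ZMOD ((p^e:ℕ):ℤ)] := (Int.modEq_zero_iff_dvd ..).2 ⟨q, rfl⟩
        simpa using hA.add h'
      · have h' : ((p^e:ℕ):ℤ) * q ≡ 0 [ZMOD ((q:ℕ):ℤ)] := (Int.modEq_zero_iff_dvd ..).2 ⟨(p^e:ℕ), by push_cast; ring⟩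
        simpa using hB.add h'
    · exact ⟨u₀, h0, hA, hB⟩
  -- choose v
  obtain ⟨v₀, hvA, hvB⟩ := myIntCRT _ _ β 1 hcop
  have hdv : ∀ r : ℕ, r.Prime → (r : ℤ) ∣ u → (r : ℤ) ∣ ((p^c*q : ℕ) : ℤ) → ¬ (r : ℤ) ∣ v₀ := by
    intro r hr hru hrn hrv
    have hrn' : r ∣ p^c*q := Int.natCast_dvd_natCast.1 hrn
    rcases (Nat.Prime.dvd_mul hr).1 hrn' with hrp | hrq
    · have hrp' : r = p := (Nat.prime_dvd_prime_iff_eq hr hp).1 (hr.dvd_of_dvd_pow hrp)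
      apply hαβ
      rw [← hrp']
      constructor
      · have uh : u ≡ α [ZMOD ((r:ℕ):ℤ)] := huA.of_dvd (hrp' ▸ hpdvd_pe)
        have h' : (r:ℤ) ∣ α - u := uh.dvd
        have := dvd_add h' hru
        simpa using this
      · have vh : v₀ ≡ β [ZMOD ((r:ℕ):ℤ)] := hvA.of_dvd (hrp' ▸ hpdvd_pe)
        have h' : (r:ℤ) ∣ β - v₀ := vh.dvd
        have := dvd_add h' hrv
        simpa using this
    · have h1r : v₀ ≡ 1 [ZMOD ((r:ℕ):ℤ)] := hvB.of_dvd (Int.natCast_dvd_natCast.2 hrq)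
      have h' : (r:ℤ) ∣ 1 - v₀ := h1r.dvd
      have hone : (r:ℤ) ∣ 1 := by
        have := dvd_add h' hrv
        simpa using this
      exact hr.one_lt.ne' (by exact_mod_cast Int.eq_one_of_dvd_one (by norm_num) hone)
  obtain ⟨kv, hkv⟩ := myShift u v₀ ((p^c*q : ℕ) : ℤ) hu0 hdv
  set v := v₀ + kv * ((p^c*q : ℕ) : ℤ) with hv
  have hvA' : v ≡ β [ZMOD ((p^c:ℕ):ℤ)] := by
    have hpc_pe : ((p^c:ℕ):ℤ) ∣ ((p^e:ℕ):ℤ) :=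
      Int.natCast_dvd_natCast.2 (pow_dvd_pow p (by omega : c ≤ e))
    have h1' : v₀ ≡ β [ZMOD ((p^c:ℕ):ℤ)] := hvA.of_dvd hpc_pe
    have h2' : kv * ((p^c*q : ℕ) : ℤ) ≡ 0 [ZMOD ((p^c:ℕ):ℤ)] := by
      refine (Int.modEq_zero_iff_dvd ..).2 ⟨kv * q, ?_⟩
      push_cast
      ring
    rw [hv]
    simpa using h1'.add h2'
  have hvB' : v ≡ 1 [ZMOD ((q:ℕ):ℤ)] := by
    have h2' : kv * ((p^c*q : ℕ) : ℤ) ≡ 0 [ZMOD ((q:ℕ):ℤ)] := by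
      refine (Int.modEq_zero_iff_dvd ..).2 ⟨kv * p^c, ?_⟩
      push_cast
      ring
    rw [hv]
    simpa using hvB.add h2'
  -- choose the parameters
  have DQ := ((Q.2 - P.2).val : ℤ)
  obtain ⟨kQ, hkQA, hkQB⟩ := myIntCRT _ _ s ((Q.2 - P.2).val : ℤ) hcop
  obtain ⟨kR, hkRA, hkRB⟩ := myIntCRT _ _ t ((R.2 - P.2).val : ℤ) hcop
  -- congruence helpers
  have hmodfst : ∀ (k w : ℤ), k ≡ w [ZMOD ((p^e:ℕ):ℤ)] →
      ∀ x : ZMod (p^a) × ZMod (p^c*q), x.1 - P.1 = ((w * α : ℤ) : ZMod (p^a)) →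
      x.1 = P.1 + ((k * u : ℤ) : ZMod (p^a)) := by
    intro k w hkw x hx
    have hpa_pe : ((p^a:ℕ):ℤ) ∣ ((p^e:ℕ):ℤ) :=
      Int.natCast_dvd_natCast.2 (pow_dvd_pow p (by omega : a ≤ e))
    have hmul : k * u ≡ w * α [ZMOD ((p^a:ℕ):ℤ)] :=
      ((hkw.mul (huA)).of_dvd hpa_pe)
    have : ((k * u : ℤ) : ZMod (p^a)) = ((w * α : ℤ) : ZMod (p^a)) :=
      (ZMod.intCast_eq_intCast_iff _ _ _).2 hmul
    rw [this, ← hx]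
    ring
  have hmodsnd : ∀ (k w : ℤ) (x : ZMod (p^a) × ZMod (p^c*q)),
      k ≡ w [ZMOD ((p^e:ℕ):ℤ)] → k ≡ ((x.2 - P.2).val : ℤ) [ZMOD ((q:ℕ):ℤ)] →
      ZMod.castHom (dvd_mul_right (p^c) q) (ZMod (p^c)) (x.2 - P.2) = ((w*β : ℤ) : ZMod (p^c)) →
      x.2 = P.2 + ((k * v : ℤ) : ZMod (p^c*q)) := by
    intro k w x hkA hkB hx
    set D : ℤ := ((x.2 - P.2).val : ℤ) with hD
    have hDcast : ((D : ℤ) : ZMod (p^c*q)) = x.2 - P.2 := by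
      rw [hD]
      push_cast
      rw [ZMod.natCast_val, ZMod.cast_id]
    -- D ≡ w * β mod p^c
    have hDpc : D ≡ w * β [ZMOD ((p^c:ℕ):ℤ)] := by
      rw [← ZMod.intCast_eq_intCast_iff]
      rw [← hx]
      rw [hD, ZMod.castHom_apply]
      push_cast
      rw [ZMod.natCast_val]
    have hpc_pe : ((p^c:ℕ):ℤ) ∣ ((p^e:ℕ):ℤ) :=
      Int.natCast_dvd_natCast.2 (pow_dvd_pow p (by omega : c ≤ e))
    have hmod1 : k * v ≡ D [ZMOD ((p^c:ℕ):ℤ)] :=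
      ((hkA.of_dvd hpc_pe).mul hvA').trans hDpc.symm
    have hmod2 : k * v ≡ D [ZMOD ((q:ℕ):ℤ)] := by
      have := hkB.mul hvB'
      simpa using this
    have hcopn : (((p^c:ℕ):ℤ)).natAbs.Coprime (((q:ℕ):ℤ)).natAbs := by
      rw [Int.natAbs_natCast, Int.natAbs_natCast]
      exact hq.pow_left c
    have hmod : k * v ≡ D [ZMOD (((p^c:ℕ):ℤ) * ((q:ℕ):ℤ))] :=
      (Int.modEq_and_modEq_iff_modEq_mul hcopn).1 ⟨hmod1, hmod2⟩
    have hmod' : k * v ≡ D [ZMOD ((p^c*q:ℕ):ℤ)] := by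
      have heq : ((p^c*q:ℕ):ℤ) = ((p^c:ℕ):ℤ) * ((q:ℕ):ℤ) := by push_cast; ring
      rw [heq]
      exact hmod
    have : ((k * v : ℤ) : ZMod (p^c*q)) = ((D : ℤ) : ZMod (p^c*q)) :=
      (ZMod.intCast_eq_intCast_iff _ _ _).2 hmod'
    rw [this, hDcast]
    ring
  -- build the line
  refine ⟨_, ⟨P, u, v, hkv, rfl⟩, ⟨0, ?_⟩, ⟨kQ, ?_⟩, ⟨kR, ?_⟩⟩
  · simp
  · exact Prod.ext (hmodfst kQ s hkQA Q h1) (hmodsnd kQ s Q hkQA hkQB h3)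
  · exact Prod.ext (hmodfst kR t hkRA R h2) (hmodsnd kR t R hkRA hkRB h4)
end M

section C
variable {p a c q : ℕ}

lemma tauC (hp : p.Prime) (ha : 1 ≤ a) (hc : 1 ≤ c) (hq : Nat.Coprime p q) (hq0 : q ≠ 0) :
    tau (p^a) (p^c*q) = tau (p^a) (p^c) := by
  haveI : NeZero (p^a) := ⟨pow_ne_zero _ hp.ne_zero⟩
  haveI : NeZero (p^c) := ⟨pow_ne_zero _ hp.ne_zero⟩
  haveI : NeZero (p^c*q) := ⟨mul_ne_zero (pow_ne_zero _ hp.ne_zero) hq0⟩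
  have hpa2 : 2 ≤ p^a := hp.two_le.trans (Nat.le_self_pow (by omega) p)
  refine le_antisymm ?_ (tau_mono_dvd (dvd_mul_right (p^c) q))
  refine tau_le (fun S hS => ?_)
  classical
  by_cases hcard : S.card ≤ 2
  · exact hcard.trans (two_le_tau hpa2 (by exact pow_pos hp.pos c))
  · push_neg at hcard
    set ψ := proj (n := p^c*q) (p^a) (dvd_mul_right (p^c) q) with hψ
    -- ψ is injective on S
    have hinj : Set.InjOn ψ ↑S := by
      intro x hx y hy hxy
      by_contra hne
      obtain ⟨z, hz, hzx, hzy⟩ : ∃ z ∈ S, z ≠ x ∧ z ≠ y := by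
        have h1 := Finset.pred_card_le_card_erase (s := S) (a := x)
        have h2 := Finset.pred_card_le_card_erase (s := S.erase x) (a := y)
        have h3 := Finset.pred_card_le_card_erase (s := S) (a := x)
        have hne' : ((S.erase x).erase y).Nonempty := by
          rw [← Finset.card_pos]
          omega
        obtain ⟨z, hz⟩ := hne'
        simp only [Finset.mem_erase] at hz
        exact ⟨z, hz.2.2, hz.2.1, hz.1⟩
      obtain ⟨t, α, β, hαβ, hd1, hd2⟩ := subD hp a c _
        (z.1 - x.1) (ZMod.castHom (dvd_mul_right (p^c) q) (ZMod (p^c)) (z.2 - x.2)) le_rfl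
      have hfst : x.1 = y.1 := by
        have h' := congrArg Prod.fst hxy
        simpa only [hψ, proj] using h'
      have hsnd : ZMod.castHom (dvd_mul_right (p^c) q) (ZMod (p^c)) x.2
          = ZMod.castHom (dvd_mul_right (p^c) q) (ZMod (p^c)) y.2 := by
        have h' := congrArg Prod.snd hxy
        simpa only [hψ, proj] using h'
      have hcol : torusCollinear (p^a) (p^c*q) x y z := by
        refine masterM hp ha hc hq hq0 x y z 0 t α β hαβ ?_ ?_ ?_ ?_
        · rw [hfst]; push_cast; ring
        · exact hd1
        · rw [map_sub, hsnd]; push_cast; ring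
        · exact hd2
      exact hS x (by exact_mod_cast hx) y (by exact_mod_cast hy) z (by exact_mod_cast hz)
        hne (Ne.symm hzx) (Ne.symm hzy) hcol
    have hcardeq : (S.image ψ).card = S.card := Finset.card_image_of_injOn hinj
    have hgood : noThreeInLine (p^a) (p^c) ↑(S.image ψ) := by
      intro P' hP' Q' hQ' R' hR' hPQ hPR hQR hcol
      simp only [Finset.coe_image, Set.mem_image, Finset.mem_coe] at hP' hQ' hR'
      obtain ⟨P0, hP0, rfl⟩ := hP'
      obtain ⟨Q0, hQ0, rfl⟩ := hQ'
      obtain ⟨R0, hR0, rfl⟩ := hR'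
      obtain ⟨L, ⟨A, u, v, huv, rfl⟩, ⟨kP, hkP⟩, ⟨kQ, hkQ⟩, ⟨kR, hkR⟩⟩ := hcol
      have hαβ : ¬((p:ℤ) ∣ u ∧ (p:ℤ) ∣ v) := by
        rintro ⟨hA, hB⟩
        have : (p:ℤ) ∣ (Int.gcd u v : ℤ) := Int.natCast_dvd_natCast.2 (Int.dvd_gcd hA hB)
        rw [huv] at this
        exact hp.one_lt.ne' (by exact_mod_cast Int.eq_one_of_dvd_one (by norm_num) this)
      have hup : torusCollinear (p^a) (p^c*q) P0 Q0 R0 := by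
        refine masterM hp ha hc hq hq0 P0 Q0 R0 (kQ - kP) (kR - kP) u v hαβ ?_ ?_ ?_ ?_
        · have e1 : (ψ Q0).1 = A.1 + ((kQ * u : ℤ) : ZMod (p^a)) := congrArg Prod.fst hkQ
          have e2 : (ψ P0).1 = A.1 + ((kP * u : ℤ) : ZMod (p^a)) := congrArg Prod.fst hkP
          have e1' : Q0.1 = A.1 + ((kQ * u : ℤ) : ZMod (p^a)) := e1
          have e2' : P0.1 = A.1 + ((kP * u : ℤ) : ZMod (p^a)) := e2
          rw [e1', e2']
          push_cast
          ring
        · have e1' : R0.1 = A.1 + ((kR * u : ℤ) : ZMod (p^a)) := congrArg Prod.fst hkR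
          have e2' : P0.1 = A.1 + ((kP * u : ℤ) : ZMod (p^a)) := congrArg Prod.fst hkP
          rw [e1', e2']
          push_cast
          ring
        · have e1' : ZMod.castHom (dvd_mul_right (p^c) q) (ZMod (p^c)) Q0.2
              = A.2 + ((kQ * v : ℤ) : ZMod (p^c)) := congrArg Prod.snd hkQ
          have e2' : ZMod.castHom (dvd_mul_right (p^c) q) (ZMod (p^c)) P0.2
              = A.2 + ((kP * v : ℤ) : ZMod (p^c)) := congrArg Prod.snd hkP
          rw [map_sub, e1', e2']
          push_cast
          ring
        · have e1' : ZMod.castHom (dvd_mul_right (p^c) q) (ZMod (p^c)) R0.2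
              = A.2 + ((kR * v : ℤ) : ZMod (p^c)) := congrArg Prod.snd hkR
          have e2' : ZMod.castHom (dvd_mul_right (p^c) q) (ZMod (p^c)) P0.2
              = A.2 + ((kP * v : ℤ) : ZMod (p^c)) := congrArg Prod.snd hkP
          rw [map_sub, e1', e2']
          push_cast
          ring
      exact hS P0 (by exact_mod_cast hP0) Q0 (by exact_mod_cast hQ0) R0 (by exact_mod_cast hR0)
        (fun h => hPQ (h ▸ rfl)) (fun h => hPR (h ▸ rfl)) (fun h => hQR (h ▸ rfl)) hup
    have := le_tau (S.image ψ) hgood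
    omega
end C

theorem stmt8 (p a m : ℕ) (hp : p.Prime) (ha : 0 < a)
    (hm : IsLeast {x : ℕ | 0 < x ∧ tau (p ^ a) x = 2 * p ^ a} m) :
    ∃ b : ℕ, a ≤ b ∧ m = p ^ b ∧ ∀ n : ℕ, 1 ≤ n → tau (p ^ a) (n + m) = tau (p ^ a) n := by
  obtain ⟨⟨hm_pos, hm_tau⟩, hlb⟩ := hm
  haveI : NeZero (p^a) := ⟨pow_ne_zero _ hp.ne_zero⟩
  have hpa2 : 2 ≤ p^a := hp.two_le.trans (Nat.le_self_pow (by omega) p)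
  -- generic upper bound
  have hub : ∀ x : ℕ, 0 < x → tau (p^a) x ≤ 2 * Nat.gcd (p^a) x := by
    intro x hx
    haveI : NeZero x := ⟨hx.ne'⟩
    exact tau_le_two_gcd _ _
  -- tau = 2p^a whenever m ∣ x
  have hfull : ∀ x : ℕ, 0 < x → m ∣ x → tau (p^a) x = 2 * p^a := by
    intro x hx hmx
    haveI : NeZero x := ⟨hx.ne'⟩
    haveI : NeZero m := ⟨hm_pos.ne'⟩
    refine le_antisymm ?_ ?_
    · refine (hub x hx).trans ?_
      have : Nat.gcd (p^a) x ≤ p^a := Nat.le_of_dvd (by omega) (Nat.gcd_dvd_left _ _)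
      omega
    · rw [← hm_tau]
      exact tau_mono_dvd hmx
  -- step 1 : p^a ∣ m
  have hpam : p^a ∣ m := by
    have h1 := hub m hm_pos
    rw [hm_tau] at h1
    have h2 : Nat.gcd (p^a) m ≤ p^a := Nat.le_of_dvd (by omega) (Nat.gcd_dvd_left _ _)
    have h3 : Nat.gcd (p^a) m = p^a := by omega
    rw [← h3]
    exact Nat.gcd_dvd_right _ _
  -- step 2 : m = p^b
  set b := m.factorization p with hb
  have hab : a ≤ b := (Nat.Prime.pow_dvd_iff_le_factorization hp hm_pos.ne').1 hpam
  have hb1 : 1 ≤ b := by omega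
  have hqcop : Nat.Coprime p (ordCompl[p] m) := Nat.coprime_ordCompl hp hm_pos.ne'
  have hq0 : ordCompl[p] m ≠ 0 := (Nat.ordCompl_pos p hm_pos.ne').ne'
  have hmeq : p ^ b * ordCompl[p] m = m := Nat.ordProj_mul_ordCompl_eq_self m p
  have hmpb : m = p ^ b := by
    have h1 : tau (p^a) (p^b * ordCompl[p] m) = tau (p^a) (p^b) :=
      tauC hp (by omega) hb1 hqcop hq0
    rw [hmeq, hm_tau] at h1
    have h2 : m ≤ p ^ b := hlb ⟨pow_pos hp.pos b, h1.symm⟩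
    have h3 : p ^ b ∣ m := Nat.ordProj_dvd m p
    have h4 : p ^ b ≤ m := Nat.le_of_dvd hm_pos h3
    omega
  -- step 3 : periodicity
  refine ⟨b, hab, hmpb, fun n hn => ?_⟩
  set c := n.factorization p with hc
  by_cases hbc : b ≤ c
  · -- m divides n and n + m
    have hpbn : p ^ b ∣ n := (pow_dvd_pow p hbc).trans (Nat.ordProj_dvd n p)
    have hmn : m ∣ n := hmpb ▸ hpbn
    rw [hfull n (by omega) hmn, hfull (n+m) (by omega) (Dvd.dvd.add hmn dvd_rfl)]
  · push_neg at hbc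
    by_cases hc0 : c = 0
    · -- p does not divide n, nor n + m
      have hpn : ¬ p ∣ n := by
        intro hdvd
        have : 1 ≤ c := (Nat.Prime.pow_dvd_iff_le_factorization hp (by omega)).1
          (by simpa using hdvd)
        omega
      have hpm : p ∣ m := by
        rw [hmpb]
        exact dvd_pow_self p (by omega)
      have hpnm : ¬ p ∣ n + m := fun hdvd => hpn ((Nat.dvd_add_right hpm).1 (by rwa [add_comm] at hdvd))
      have key : ∀ x : ℕ, 0 < x → ¬ p ∣ x → tau (p^a) x = 2 := by
        intro x hx hpx
        have hcop : Nat.Coprime (p^a) x := (Nat.Prime.coprime_iff_not_dvd hp |>.2 hpx).pow_left a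
        refine le_antisymm ?_ (two_le_tau hpa2 hx)
        have := hub x hx
        rw [hcop] at this
        omega
      rw [key n (by omega) hpn, key (n+m) (by omega) hpnm]
    · -- 1 ≤ c < b
      have hc1 : 1 ≤ c := by omega
      have hqn : Nat.Coprime p (ordCompl[p] n) := Nat.coprime_ordCompl hp (by omega)
      have hqn0 : ordCompl[p] n ≠ 0 := (Nat.ordCompl_pos p (by omega : n ≠ 0)).ne'
      have hneq : p ^ c * ordCompl[p] n = n := Nat.ordProj_mul_ordCompl_eq_self n p
      have h1 : tau (p^a) n = tau (p^a) (p^c) := by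
        rw [← hneq]
        exact tauC hp (by omega) hc1 hqn hqn0
      have hnm : n + m = p ^ c * (ordCompl[p] n + p ^ (b - c)) := by
        rw [hmpb, Nat.mul_add, hneq, ← pow_add]
        congr 2
        omega
      have hq2 : ¬ p ∣ (ordCompl[p] n + p ^ (b - c)) := by
        intro hdvd
        have h2 : p ∣ p ^ (b - c) := dvd_pow_self p (by omega)
        have h3 : p ∣ ordCompl[p] n := (Nat.dvd_add_right h2).1 (by rwa [add_comm] at hdvd)
        exact (Nat.Prime.coprime_iff_not_dvd hp).1 hqn h3
      have hq20 : (ordCompl[p] n + p ^ (b - c)) ≠ 0 := by positivity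
      have h2 : tau (p^a) (n + m) = tau (p^a) (p^c) := by
        rw [hnm]
        exact tauC hp (by omega) hc1 ((Nat.Prime.coprime_iff_not_dvd hp).2 hq2) hq20
      rw [h1, h2]
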